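/- If (u_n) is a positive sequence whose weighted geometric means converge to a > 0, and (u_n) is *-slowly oscillating (liminf_{λ→1⁺} limsup_{n→∞} max_{n<m≤λ_n} |u_m/u_n|* = 1), then u_n → a. -/

import Mathlib

open Filter

noncomputable def mulAbs (x : ℝ) : ℝ := if 1 ≤ x then x else x⁻¹

noncomputable def Psum (p : ℕ → ℝ) (n : ℕ) : ℝ := ∑ k ∈ Finset.range (n + 1), p k

noncomputable def wgm (p u : ℕ → ℝ) (n : ℕ) : ℝ :=
  (∏ k ∈ Finset.range (n + 1), u k ^ p k) ^ (1 / Psum p n)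

def SVA (p : ℕ → ℝ) : Prop :=
  ∀ l : ℝ, 0 < l → l ≠ 1 →
    0 < liminf (fun n : ℕ => |Psum p ⌊l * (n : ℝ)⌋₊ / Psum p n - 1|) atTop

def StarSlowlyOscillating (u : ℕ → ℝ) : Prop :=
  liminf (fun l : ℝ =>
      limsup (fun n : ℕ =>
          sSup ((fun m => mulAbs (u m / u n)) '' Set.Ioc n ⌊l * (n : ℝ)⌋₊)) atTop)
    (nhdsWithin 1 (Set.Ioi 1)) = 1

/-! ### Auxiliary lemmas -/

lemma aux_limsup_nonneg_of_nonneg {u : ℕ → ℝ} (h : ∀ n, 0 ≤ u n) : 0 ≤ limsup u atTop := by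
  rw [limsup_eq]
  rcases Set.eq_empty_or_nonempty {a : ℝ | ∀ᶠ n in atTop, u n ≤ a} with he | hne
  · rw [he, Real.sInf_empty]
  · exact Real.sInf_nonneg fun a ha => le_trans (h _) ha.exists.choose_spec

lemma aux_cobounded_of_liminf_eq_one {α : Type*} {f : Filter α} {u : α → ℝ}
    (h : liminf u f = 1) : IsCoboundedUnder (· ≥ ·) f u := by
  by_contra hc
  have hb : ¬ BddAbove {a : ℝ | ∀ᶠ x in f, a ≤ u x} := by
    rintro ⟨b, hb⟩
    exact hc ⟨b, fun a ha => hb ha⟩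
  rw [liminf_eq, Real.sSup_of_not_bddAbove hb] at h
  norm_num at h

lemma aux_bounded_of_limsup_pos {u : ℕ → ℝ} (h : 0 < limsup u atTop) :
    IsBoundedUnder (· ≤ ·) atTop u := by
  by_contra hb
  have he : {a : ℝ | ∀ᶠ n in atTop, u n ≤ a} = ∅ := by
    ext a
    simp only [Set.mem_setOf_eq, Set.mem_empty_iff_false, iff_false]
    exact fun ha => hb ⟨a, ha⟩
  rw [limsup_eq, he, Real.sInf_empty] at h
  norm_num at h

lemma aux_mulAbs_eq_exp (z : ℝ) (hz : 0 < z) : mulAbs z = Real.exp |Real.log z| := by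
  unfold mulAbs
  rcases le_or_gt 1 z with h | h
  · rw [if_pos h, abs_of_nonneg (Real.log_nonneg h), Real.exp_log hz]
  · rw [if_neg (not_le.mpr h), abs_of_neg (Real.log_neg hz h), Real.exp_neg, Real.exp_log hz]

lemma aux_mulAbs_nonneg (z : ℝ) (hz : 0 < z) : 0 ≤ mulAbs z := by
  rw [aux_mulAbs_eq_exp z hz]; exact (Real.exp_pos _).le

lemma aux_sum_Ioc_eq (q : ℕ → ℝ) {n m : ℕ} (h : n ≤ m) :
    ∑ k ∈ Finset.Ioc n m, q k
      = ∑ k ∈ Finset.range (m+1), q k - ∑ k ∈ Finset.range (n+1), q k := by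
  rw [← Finset.Ico_add_one_add_one_eq_Ioc, eq_sub_iff_add_eq, add_comm, Finset.range_eq_Ico, Finset.range_eq_Ico]
  exact Finset.sum_Ico_consecutive q (Nat.zero_le _) (Nat.succ_le_succ h)

theorem slowly_oscillating_tauberian (p u : ℕ → ℝ) (a : ℝ)
    (hp : ∀ n, 0 ≤ p n) (hp0 : 0 < p 0)
    (hP : Tendsto (Psum p) atTop atTop) (hSVA : SVA p)
    (hu : ∀ n, 0 < u n) (ha : 0 < a)
    (hw : Tendsto (wgm p u) atTop (nhds a))
    (hso : StarSlowlyOscillating u) :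
    Tendsto u atTop (nhds a) := by
  have hPpos : ∀ n, 0 < Psum p n := by
    intro n
    have h0 : p 0 ≤ Psum p n :=
      Finset.single_le_sum (fun i _ => hp i) (Finset.mem_range.mpr n.succ_pos)
    linarith
  have hPmono : ∀ {n m : ℕ}, n ≤ m → Psum p n ≤ Psum p m := by
    intro n m h
    exact Finset.sum_le_sum_of_subset_of_nonneg
      (Finset.range_subset_range.mpr (Nat.succ_le_succ h)) (fun i _ _ => hp i)
  set v : ℕ → ℝ := fun n => Real.log (u n) with hvdef
  set b : ℝ := Real.log a with hbdef
  set t : ℕ → ℝ := fun n => (∑ k ∈ Finset.range (n+1), p k * v k) / Psum p n with htdef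
  have hA : ∀ j, Psum p j * t j = ∑ k ∈ Finset.range (j+1), p k * v k := by
    intro j
    simp only [htdef]
    rw [mul_comm]
    exact div_mul_cancel₀ _ (hPpos j).ne'
  have hwgm : ∀ n, wgm p u n = Real.exp (t n) := by
    intro n
    have h1 : ∏ k ∈ Finset.range (n+1), u k ^ p k
        = Real.exp (∑ k ∈ Finset.range (n+1), p k * v k) := by
      rw [Real.exp_sum]
      exact Finset.prod_congr rfl fun k _ => by
        rw [Real.rpow_def_of_pos (hu k), mul_comm]
    rw [wgm, h1, Real.rpow_def_of_pos (Real.exp_pos _), Real.log_exp, mul_one_div]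
  have ht : Tendsto t atTop (nhds b) := by
    have h2 := hw.log ha.ne'
    have h3 : (fun n => Real.log (wgm p u n)) = t := by
      funext n; rw [hwgm n, Real.log_exp]
    rwa [h3] at h2
  -- the key estimate
  have key : ∀ ε : ℝ, 0 < ε → ∀ᶠ n in atTop, |v n - b| < ε := by
    intro ε hε
    set F : ℝ → ℝ := fun l =>
      limsup (fun n : ℕ =>
          sSup ((fun m => mulAbs (u m / u n)) '' Set.Ioc n ⌊l * (n : ℝ)⌋₊)) atTop with hFdef
    have hso' : liminf F (nhdsWithin 1 (Set.Ioi 1)) = 1 := hso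
    set ε1 : ℝ := Real.exp (ε/2) - 1 with hε1def
    have hε1 : 0 < ε1 := by
      have : Real.exp 0 < Real.exp (ε/2) := Real.exp_lt_exp.mpr (by linarith)
      rw [Real.exp_zero] at this
      simp only [hε1def]; linarith
    have hFnonneg : ∀ l, 0 ≤ F l := by
      intro l
      refine aux_limsup_nonneg_of_nonneg fun n => Real.sSup_nonneg fun x hx => ?_
      obtain ⟨m, _, rfl⟩ := hx
      exact aux_mulAbs_nonneg _ (div_pos (hu m) (hu n))
    have h1 : ∃ᶠ l in nhdsWithin 1 (Set.Ioi 1), F l < 1 + ε1 :=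
      frequently_lt_of_liminf_lt (aux_cobounded_of_liminf_eq_one hso')
        (by rw [hso']; linarith)
    have h2 : ∀ᶠ l in nhdsWithin 1 (Set.Ioi 1), (1/2 : ℝ) < F l :=
      eventually_lt_of_lt_liminf (by rw [hso']; norm_num)
        (isBoundedUnder_of ⟨0, fun l => hFnonneg l⟩)
    have h3 : ∀ᶠ l in nhdsWithin (1:ℝ) (Set.Ioi 1), l ∈ Set.Ioi (1:ℝ) :=
      eventually_mem_nhdsWithin
    obtain ⟨l, hl1, hl2, hl3⟩ := (h1.and_eventually (h2.and h3)).exists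
    rw [Set.mem_Ioi] at hl3
    set S : ℕ → ℝ := fun n =>
      sSup ((fun m => mulAbs (u m / u n)) '' Set.Ioc n ⌊l * (n : ℝ)⌋₊) with hSdef
    have hFS : F l = limsup S atTop := rfl
    have hSb : IsBoundedUnder (· ≤ ·) atTop S := by
      apply aux_bounded_of_limsup_pos
      rw [← hFS]; linarith
    have hS : ∀ᶠ n in atTop, S n < 1 + ε1 := by
      apply eventually_lt_of_limsup_lt _ hSb
      rw [← hFS]; exact hl1
    -- SVA consequences
    have hc := hSVA l (by linarith) (by intro h; rw [h] at hl3; exact lt_irrefl _ hl3)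
    set c : ℝ := liminf (fun n : ℕ => |Psum p ⌊l * (n : ℝ)⌋₊ / Psum p n - 1|) atTop with hcdef
    have hPr : ∀ᶠ n : ℕ in atTop, c/2 < |Psum p ⌊l * (n : ℝ)⌋₊ / Psum p n - 1| :=
      eventually_lt_of_lt_liminf (by rw [← hcdef]; linarith)
        (isBoundedUnder_of ⟨0, fun n => abs_nonneg _⟩)
    set C : ℝ := (2 + c)/c with hCdef
    have hCpos : 0 < C := by positivity
    have hδ : 0 < ε/(8*C) := by positivity
    have htn : ∀ᶠ n in atTop, |t n - b| < ε/(8*C) := by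
      have := Metric.tendsto_nhds.mp ht (ε/(8*C)) hδ
      simpa [Real.dist_eq] using this
    have hmfl : ∀ n : ℕ, n ≤ ⌊l * (n : ℝ)⌋₊ := fun n =>
      Nat.le_floor (le_mul_of_one_le_left (Nat.cast_nonneg n) hl3.le)
    have hm : Tendsto (fun n : ℕ => ⌊l * (n : ℝ)⌋₊) atTop atTop :=
      tendsto_atTop_mono hmfl tendsto_id
    have htm : ∀ᶠ n : ℕ in atTop, |t ⌊l * (n : ℝ)⌋₊ - b| < ε/(8*C) := hm.eventually htn
    have hfloor : ∀ᶠ n : ℕ in atTop, n < ⌊l * (n : ℝ)⌋₊ := by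
      obtain ⟨N, hN⟩ := exists_nat_gt (1 / (l - 1))
      filter_upwards [eventually_ge_atTop (N + 1)] with n hn
      have hl1' : 0 < l - 1 := by linarith
      have h1' : 1 / (l - 1) < (n : ℝ) :=
        lt_of_lt_of_le hN (by exact_mod_cast Nat.le_of_succ_le hn)
      have h2' : (1:ℝ) < (l - 1) * n := by
        rw [div_lt_iff₀ hl1'] at h1'; linarith
      have h3' : ((n:ℝ) + 1) ≤ l * n := by nlinarith
      have h4' : (n + 1 : ℕ) ≤ ⌊l * (n:ℝ)⌋₊ := Nat.le_floor (by push_cast; linarith)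
      omega
    filter_upwards [hS, hPr, htn, htm, hfloor] with n hSn hPrn htnn htmn hfn
    set m : ℕ := ⌊l * (n : ℝ)⌋₊ with hmdef
    set Pn : ℝ := Psum p n with hPn
    set Pm : ℝ := Psum p m with hPm
    have hPnm : Pn ≤ Pm := hPmono hfn.le
    have hPngt : 0 < Pn := hPpos n
    have hPmgt : 0 < Pm := hPpos m
    have h4 : c/2 < Pm / Pn - 1 := by
      rwa [abs_of_nonneg (by rw [sub_nonneg, le_div_iff₀ hPngt, one_mul]; exact hPnm)] at hPrn
    have h5 : (c/2 + 1) * Pn < Pm := (lt_div_iff₀ hPngt).mp (by linarith)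
    have hPmn_pos : 0 < Pm - Pn := by nlinarith
    have hPmC : Pm ≤ C * (Pm - Pn) := by
      rw [hCdef, div_mul_eq_mul_div, le_div_iff₀ hc]
      nlinarith
    -- pointwise oscillation bound
    have hAbs : ∀ k ∈ Finset.Ioc n m, |v k - v n| < ε/2 := by
      intro k hk
      have hk' : k ∈ Set.Ioc n m := Finset.mem_Ioc.mp hk
      have hmem : mulAbs (u k / u n) ∈ ((fun j => mulAbs (u j / u n)) '' Set.Ioc n m) :=
        ⟨k, hk', rfl⟩
      have hle : mulAbs (u k / u n) ≤ S n :=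
        le_csSup (((Set.finite_Ioc n m).image _).bddAbove) hmem
      have heq : mulAbs (u k / u n) = Real.exp |v k - v n| := by
        rw [aux_mulAbs_eq_exp _ (div_pos (hu k) (hu n)),
          Real.log_div (hu k).ne' (hu n).ne']
      have hlt : Real.exp |v k - v n| < Real.exp (ε/2) := by
        rw [← heq]
        calc mulAbs (u k / u n) ≤ S n := hle
          _ < 1 + ε1 := hSn
          _ = Real.exp (ε/2) := by rw [hε1def]; ring
      exact Real.exp_lt_exp.mp hlt
    -- sum identities
    have hAm : ∑ k ∈ Finset.Ioc n m, p k * v k = Pm * t m - Pn * t n := by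
      rw [aux_sum_Ioc_eq _ hfn.le, ← hA m, ← hA n]
    have hB : ∑ k ∈ Finset.Ioc n m, p k = Pm - Pn := by
      rw [aux_sum_Ioc_eq p hfn.le]; rfl
    have e1 : ∑ k ∈ Finset.Ioc n m, p k * (v k - v n)
        = (Pm * t m - Pn * t n) - (Pm - Pn) * v n := by
      have e0 : ∑ k ∈ Finset.Ioc n m, p k * (v k - v n)
          = ∑ k ∈ Finset.Ioc n m, p k * v k - (∑ k ∈ Finset.Ioc n m, p k) * v n := by
        rw [Finset.sum_mul, ← Finset.sum_sub_distrib]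
        exact Finset.sum_congr rfl fun k _ => by ring
      rw [e0, hAm, hB]
    have hkey : (Pm - Pn) * (v n - b)
        = Pm * (t m - b) - Pn * (t n - b) - ∑ k ∈ Finset.Ioc n m, p k * (v k - v n) := by
      rw [e1]; ring
    have hsum : |∑ k ∈ Finset.Ioc n m, p k * (v k - v n)| ≤ (Pm - Pn) * (ε/2) := by
      calc |∑ k ∈ Finset.Ioc n m, p k * (v k - v n)|
          ≤ ∑ k ∈ Finset.Ioc n m, |p k * (v k - v n)| := Finset.abs_sum_le_sum_abs _ _
        _ ≤ ∑ k ∈ Finset.Ioc n m, p k * (ε/2) := by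
            refine Finset.sum_le_sum fun k hk => ?_
            rw [abs_mul, abs_of_nonneg (hp k)]
            exact mul_le_mul_of_nonneg_left (le_of_lt (hAbs k hk)) (hp k)
        _ = (Pm - Pn) * (ε/2) := by rw [← Finset.sum_mul, hB]
    have hC8 : C * (ε / (8*C)) = ε/8 := by field_simp
    have hb1 : Pm * |t m - b| ≤ (Pm - Pn) * (ε/8) := by
      calc Pm * |t m - b| ≤ (C * (Pm - Pn)) * (ε/(8*C)) :=
            mul_le_mul hPmC htmn.le (abs_nonneg _) (by positivity)
        _ = (Pm - Pn) * (ε/8) := by rw [mul_comm C, mul_assoc, hC8]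
    have hb2 : Pn * |t n - b| ≤ (Pm - Pn) * (ε/8) := by
      calc Pn * |t n - b| ≤ (C * (Pm - Pn)) * (ε/(8*C)) :=
            mul_le_mul (hPnm.trans hPmC) htnn.le (abs_nonneg _) (by positivity)
        _ = (Pm - Pn) * (ε/8) := by rw [mul_comm C, mul_assoc, hC8]
    have hX : |Pm * (t m - b) - Pn * (t n - b) - ∑ k ∈ Finset.Ioc n m, p k * (v k - v n)|
        ≤ (Pm - Pn) * (3*ε/4) := by
      have t1 : |Pm * (t m - b)| ≤ (Pm - Pn) * (ε/8) := by
        rwa [abs_mul, abs_of_pos hPmgt]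
      have t2 : |Pn * (t n - b)| ≤ (Pm - Pn) * (ε/8) := by
        rwa [abs_mul, abs_of_pos hPngt]
      calc |Pm * (t m - b) - Pn * (t n - b) - ∑ k ∈ Finset.Ioc n m, p k * (v k - v n)|
          ≤ |Pm * (t m - b) - Pn * (t n - b)|
            + |∑ k ∈ Finset.Ioc n m, p k * (v k - v n)| := abs_sub _ _
        _ ≤ (|Pm * (t m - b)| + |Pn * (t n - b)|)
            + |∑ k ∈ Finset.Ioc n m, p k * (v k - v n)| := by
            have := abs_sub (Pm * (t m - b)) (Pn * (t n - b))
            linarith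
        _ ≤ (Pm - Pn) * (3*ε/4) := by linarith
    have hfin : (Pm - Pn) * |v n - b| ≤ (Pm - Pn) * (3*ε/4) := by
      have h6 : |(Pm - Pn) * (v n - b)| ≤ (Pm - Pn) * (3*ε/4) := by
        rw [hkey]; exact hX
      rwa [abs_mul, abs_of_pos hPmn_pos] at h6
    have h7 : |v n - b| ≤ 3*ε/4 := le_of_mul_le_mul_left hfin hPmn_pos
    linarith
  have hvb : Tendsto v atTop (nhds b) := by
    rw [Metric.tendsto_nhds]
    intro ε hε
    simpa [Real.dist_eq] using key ε hε
  have hexp : Tendsto (fun n => Real.exp (v n)) atTop (nhds (Real.exp b)) :=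
    (Real.continuous_exp.tendsto _).comp hvb
  have he : (fun n => Real.exp (v n)) = u := funext fun n => Real.exp_log (hu n)
  rw [he, hbdef, Real.exp_log ha] at hexp
  exact hexp
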